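/- Let Δ be an m-invariant set (Δ + m ⊆ Δ) that is bounded below and co-bounded. Then the set of m-generators Δ \ (Δ + m) contains exactly one element from each residue class modulo m; in particular it has exactly m elements. -/
import Mathlib


/-- The shift of a set of integers: `Δ + k`. -/
def shiftSet (Δ : Set ℤ) (k : ℤ) : Set ℤ := (· + k) '' Δ

/-- `Δ` is `k`-invariant if `Δ + k ⊆ Δ`. -/
def Invariant (k : ℤ) (Δ : Set ℤ) : Prop := shiftSet Δ k ⊆ Δ

/-- `Δ` is bounded (has a minimum element). -/
def HasMin (Δ : Set ℤ) : Prop := ∃ a ∈ Δ, ∀ x ∈ Δ, a ≤ x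

/-- `Δ` is co-bounded: contains all sufficiently large integers. -/
def CoBounded (Δ : Set ℤ) : Prop := ∃ N : ℤ, ∀ x : ℤ, N ≤ x → x ∈ Δ

/-- The `k`-generators of `Δ`: elements `a ∈ Δ` with `a - k ∉ Δ`, i.e. `Δ \ (Δ + k)`. -/
def gens (k : ℤ) (Δ : Set ℤ) : Set ℤ := Δ \ shiftSet Δ k

/-- The `(j+1)`-st smallest element of a set of integers. -/
noncomputable def nthSmallest : ℕ → Set ℤ → ℤ
  | 0, S => sInf S
  | j+1, S => nthSmallest j (S \ {sInf S})

/-- The letter `j ∈ [m]` acts on an `m`-invariant set by removing its `(j+1)`-st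
smallest `m`-generator. -/
noncomputable def letterAct (m : ℤ) (j : ℕ) (Δ : Set ℤ) : Set ℤ :=
  Δ \ {nthSmallest j (gens m Δ)}

/-- `steps m p Δ i = p_{i-1} ⋯ p_1 p_0 ⋅ Δ`: the word acts one letter at a
time, the letter `p 0` (rightmost) acting first. -/
noncomputable def steps (m : ℤ) (p : ℕ → ℕ) (Δ : Set ℤ) : ℕ → Set ℤ
  | 0 => Δ
  | i+1 => letterAct m (p i) (steps m p Δ i)

lemma sub_emod_self (a m : ℤ) : (a - m) % m = a % m := by
  rw [Int.sub_emod, Int.emod_self, sub_zero, Int.emod_emod_of_dvd _ dvd_rfl]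

lemma invariant_add_nsmul {m : ℤ} {Δ : Set ℤ} (hI : Invariant m Δ) {a : ℤ} (ha : a ∈ Δ) :
    ∀ k : ℕ, a + k * m ∈ Δ
  | 0 => by simpa using ha
  | k+1 => by
    have h1 := invariant_add_nsmul hI ha k
    have h2 : (a + k*m) + m ∈ Δ := hI ⟨_, h1, rfl⟩
    have : a + (↑(k+1)) * m = (a + k*m) + m := by push_cast; ring
    rwa [this]

lemma mem_of_le_modeq {m : ℤ} (hm : 0 < m) {Δ : Set ℤ} (hI : Invariant m Δ) {a b : ℤ}
    (ha : a ∈ Δ) (hab : a ≤ b) (hmod : a % m = b % m) : b ∈ Δ := by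
  have hdvd : m ∣ b - a := Int.ModEq.dvd hmod
  obtain ⟨k, hk⟩ := hdvd
  have hk0 : 0 ≤ k := by nlinarith
  have : b = a + k.toNat * m := by rw [Int.toNat_of_nonneg hk0]; linarith
  rw [this]
  exact invariant_add_nsmul hI ha _

/-- The `m`-generators of a bounded, co-bounded `m`-invariant set contain exactly one
element of each residue class mod `m`; in particular there are exactly `m` of them. -/
theorem gens_unique_residues (m : ℤ) (hm : 0 < m) (Δ : Set ℤ)
    (hI : Invariant m Δ) (hb : HasMin Δ) (hc : CoBounded Δ) :
    (∀ r : ℤ, ∃! a : ℤ, a ∈ gens m Δ ∧ a % m = r % m) ∧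
    ∃ s : Finset ℤ, (↑s : Set ℤ) = gens m Δ ∧ s.card = m.toNat := by
  classical
  -- existence/uniqueness part
  have key : ∀ r : ℤ, ∃! a : ℤ, a ∈ gens m Δ ∧ a % m = r % m := by
    intro r
    obtain ⟨a0, ha0, ha0min⟩ := hb
    obtain ⟨N, hN⟩ := hc
    set P : ℤ → Prop := fun z => z ∈ Δ ∧ z % m = r % m with hP
    have hbdd : ∃ b : ℤ, ∀ z : ℤ, P z → b ≤ z := ⟨a0, fun z hz => ha0min z hz.1⟩
    have hinh : ∃ z : ℤ, P z := by
      refine ⟨r + (N - r).toNat * m, hN _ ?_, by simp [Int.add_mul_emod_self_left]⟩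
      have h1 : (N - r : ℤ) ≤ (N - r).toNat := Int.self_le_toNat _
      have h2 : ((N - r).toNat : ℤ) * 1 ≤ (N - r).toNat * m := by
        apply mul_le_mul_of_nonneg_left hm (by positivity)
      linarith
    obtain ⟨a, ⟨haΔ, har⟩, hleast⟩ := Int.exists_least_of_bdd hbdd hinh
    have hagen : a ∈ gens m Δ := by
      refine ⟨haΔ, fun hmem => ?_⟩
      obtain ⟨x, hx, hxe⟩ := hmem
      simp only at hxe
      have hxP : P x := ⟨hx, by
        have hx' : x = a - m := by linarith
        rw [hx', sub_emod_self, har]⟩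
      have := hleast x hxP
      linarith
    refine ⟨a, ⟨hagen, har⟩, ?_⟩
    rintro b ⟨⟨hbΔ, hbgen⟩, hbr⟩
    have hmod : a % m = b % m := by rw [har, hbr]
    have hab : a ≤ b := hleast b ⟨hbΔ, hbr⟩
    by_contra hne
    have hlt : a < b := lt_of_le_of_ne hab (fun h => hne h.symm)
    have hdvd : m ∣ b - a := Int.ModEq.dvd hmod
    have hge : m ≤ b - a := Int.le_of_dvd (by linarith) hdvd
    have hbm : b - m ∈ Δ := by
      apply mem_of_le_modeq hm hI haΔ (by linarith)
      rw [sub_emod_self]; exact hmod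
    exact hbgen ⟨b - m, hbm, by ring⟩
  refine ⟨key, ?_⟩
  -- finiteness part
  set g : ℤ → ℤ := fun r => (key r).choose with hg
  have hg1 : ∀ r, g r ∈ gens m Δ ∧ g r % m = r % m := fun r => (key r).choose_spec.1
  have hg2 : ∀ r b, b ∈ gens m Δ ∧ b % m = r % m → b = g r := fun r b h =>
    (key r).choose_spec.2 b h
  refine ⟨(Finset.range m.toNat).image (fun i : ℕ => g (i : ℤ)), ?_, ?_⟩
  · ext b
    simp only [Finset.coe_image, Finset.coe_range, Set.mem_image, Set.mem_Iio]
    constructor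
    · rintro ⟨i, _, rfl⟩
      exact (hg1 _).1
    · intro hb
      have h0 : 0 ≤ b % m := Int.emod_nonneg b (ne_of_gt hm)
      have h1 : b % m < m := Int.emod_lt_of_pos b hm
      refine ⟨(b % m).toNat, ?_, ?_⟩
      · omega
      · rw [Int.toNat_of_nonneg h0]
        exact (hg2 (b % m) b ⟨hb, (Int.emod_emod_of_dvd b dvd_rfl).symm⟩).symm
  · rw [Finset.card_image_of_injOn, Finset.card_range]
    intro i hi j hj hij
    simp only at hij
    simp only [Finset.mem_coe, Finset.mem_range] at hi hj
    have h1 : g (i : ℤ) % m = (i : ℤ) % m := (hg1 _).2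
    have h2 : g (j : ℤ) % m = (j : ℤ) % m := (hg1 _).2
    have hi' : (i : ℤ) % m = i := Int.emod_eq_of_lt (by positivity) (by omega)
    have hj' : (j : ℤ) % m = j := Int.emod_eq_of_lt (by positivity) (by omega)
    have : (i : ℤ) = j := by rw [← hi', ← hj', ← h1, ← h2, hij]
    exact_mod_cast this
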